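/- arXiv:2302.12298 — 2 statements merged into one kernel-verified Lean document; each statement's English description precedes it below -/
import Mathlib

section
/- Let p > 1, let f be a non-negative measurable function on (0,∞), and define g(x) = x^{1/(p-1)} f(x^{p/(p-1)}) (equivalently f(x) = g(x^{1-1/p}) x^{-1/p}). Then the classical Hardy inequality ∫₀^∞ ((1/x)∫₀^x f(y) dy)^p dx ≤ (p/(p-1))^p ∫₀^∞ f(x)^p dx holds if and only if ∫₀^∞ ((1/x)∫₀^x g(y) dy)^p dx/x ≤ ∫₀^∞ g(x)^p dx/x holds. -/
open MeasureTheory Set Real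

/-- Equivalence of the classical Hardy inequality (with Lebesgue measure) and its
convexity form (with the Haar measure `dx/x`), via the substitution
`g x = x^(1/(p-1)) * f (x^(p/(p-1)))`, i.e. `f x = g (x^(1-1/p)) * x^(-1/p)`. -/
theorem hardy_classical_iff_haar (p : ℝ) (hp : 1 < p) (f g : ℝ → ℝ)
    (hf : Measurable f) (hf0 : ∀ x ∈ Ioi (0:ℝ), 0 ≤ f x)
    (hgdef : ∀ x ∈ Ioi (0:ℝ), g x = x ^ (1/(p-1)) * f (x ^ (p/(p-1)))) :
    ((∫ x in Ioi (0:ℝ), ((1/x) * ∫ y in Ioo (0:ℝ) x, f y) ^ p)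
        ≤ (p/(p-1)) ^ p * ∫ x in Ioi (0:ℝ), (f x) ^ p)
      ↔ ((∫ x in Ioi (0:ℝ), ((1/x) * ∫ y in Ioo (0:ℝ) x, g y) ^ p / x)
        ≤ ∫ x in Ioi (0:ℝ), (g x) ^ p / x) := by
  have hp0 : (0:ℝ) < p - 1 := by linarith
  set q : ℝ := p / (p - 1) with hq_def
  have hq : 0 < q := div_pos (by linarith) hp0
  have hq1 : q - 1 = 1 / (p - 1) := by rw [hq_def]; field_simp; ring
  have hqp : (q - 1) * p = q := by rw [hq_def]; field_simp; ring
  -- B' = (1/q) * B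
  have hB : (∫ x in Ioi (0:ℝ), (g x) ^ p / x)
      = (1/q) * ∫ x in Ioi (0:ℝ), (f x) ^ p := by
    have h := integral_comp_rpow_Ioi_of_pos (g := fun u => (f u) ^ p) hq
    rw [← h, ← integral_const_mul]
    refine setIntegral_congr_fun measurableSet_Ioi ?_
    intro y hy
    have hy0 : (0:ℝ) < y := hy
    have hfy : 0 ≤ f (y ^ q) := hf0 _ (rpow_pos_of_pos hy0 q)
    simp only [smul_eq_mul]
    rw [hgdef y hy, ← hq1]
    rw [mul_rpow (rpow_nonneg hy0.le _) hfy, ← rpow_mul hy0.le, hqp,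
      mul_div_right_comm, ← rpow_sub_one hy0.ne']
    field_simp
  -- inner integral substitution
  have hinner : ∀ x ∈ Ioi (0:ℝ), (∫ y in Ioo (0:ℝ) x, g y)
      = (1/q) * ∫ u in Ioo (0:ℝ) (x ^ q), f u := by
    intro x hx
    have hx0 : (0:ℝ) < x := hx
    have h1 : (∫ u in Ioo (0:ℝ) (x ^ q), f u)
        = ∫ u in Ioi (0:ℝ), (Ioo (0:ℝ) (x ^ q)).indicator f u := by
      rw [setIntegral_indicator measurableSet_Ioo,
        inter_eq_self_of_subset_right Ioo_subset_Ioi_self]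
    have h2 := integral_comp_rpow_Ioi_of_pos
      (g := (Ioo (0:ℝ) (x ^ q)).indicator f) hq
    rw [h1, ← h2, ← integral_const_mul]
    have h3 : (∫ y in Ioo (0:ℝ) x, g y)
        = ∫ y in Ioi (0:ℝ), (Ioo (0:ℝ) x).indicator g y := by
      rw [setIntegral_indicator measurableSet_Ioo,
        inter_eq_self_of_subset_right Ioo_subset_Ioi_self]
    rw [h3]
    refine setIntegral_congr_fun measurableSet_Ioi ?_
    intro y hy
    have hy0 : (0:ℝ) < y := hy
    simp only [smul_eq_mul]
    rw [indicator, indicator]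
    have hmem : y ^ q ∈ Ioo (0:ℝ) (x ^ q) ↔ y ∈ Ioo (0:ℝ) x := by
      simp only [mem_Ioo, rpow_pos_of_pos hy0, hy0, true_and]
      exact rpow_lt_rpow_iff hy0.le hx0.le hq
    by_cases hc : y ∈ Ioo (0:ℝ) x
    · rw [if_pos hc, if_pos (hmem.mpr hc), hgdef y hy, ← hq1]
      field_simp
    · rw [if_neg hc, if_neg (fun h => hc (hmem.mp h))]
      ring
  -- A' = q^(-(p+1)) * A
  have hA : (∫ x in Ioi (0:ℝ), ((1/x) * ∫ y in Ioo (0:ℝ) x, g y) ^ p / x)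
      = q ^ (-(p+1)) * ∫ t in Ioi (0:ℝ), ((1/t) * ∫ y in Ioo (0:ℝ) t, f y) ^ p := by
    have h := integral_comp_rpow_Ioi_of_pos
      (g := fun t => ((1/t) * ∫ y in Ioo (0:ℝ) t, f y) ^ p) hq
    rw [← h, ← integral_const_mul]
    refine setIntegral_congr_fun measurableSet_Ioi ?_
    intro x hx
    have hx0 : (0:ℝ) < x := hx
    have hxq : (0:ℝ) < x ^ q := rpow_pos_of_pos hx0 q
    have hI : 0 ≤ ∫ u in Ioo (0:ℝ) (x ^ q), f u :=
      setIntegral_nonneg measurableSet_Ioo (fun u hu => hf0 u hu.1)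
    simp only [smul_eq_mul]
    rw [hinner x hx]
    set I := ∫ u in Ioo (0:ℝ) (x ^ q), f u with hI_def
    have e1 : (1/x) * ((1/q) * I) = ((x*q)⁻¹) * I := by field_simp
    have e2 : (1/(x^q)) * I = ((x^q)⁻¹) * I := by rw [one_div]
    rw [e1, e2, mul_rpow (by positivity) hI, mul_rpow (by positivity) hI,
      inv_rpow (by positivity), inv_rpow (by positivity),
      mul_rpow hx0.le hq.le]
    have e3 : (x^q)^p = x^(q-1) * (x^p * x) := by
      rw [← rpow_mul hx0.le, show q*p = (q-1)+(p+1) by nlinarith [hqp],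
        rpow_add hx0, rpow_add hx0, rpow_one]
    have e4 : q^(-(p+1)) = (q^p * q)⁻¹ := by
      rw [rpow_neg hq.le, rpow_add hq, rpow_one]
    rw [e3, e4]
    have h1 : (0:ℝ) < x^p := rpow_pos_of_pos hx0 _
    have h2 : (0:ℝ) < q^p := rpow_pos_of_pos hq _
    have h3 : (0:ℝ) < x^(q-1) := rpow_pos_of_pos hx0 _
    field_simp
  rw [hA, hB]
  have hc : (0:ℝ) < q ^ (-(p+1)) := rpow_pos_of_pos hq _
  have hcc : q ^ (-(p+1)) * q ^ p = 1/q := by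
    rw [← rpow_add hq, show -(p+1)+p = -1 by ring, rpow_neg_one, one_div]
  rw [← hcc, mul_assoc, mul_le_mul_iff_right₀ hc]
end

section
/- The constant 1 is sharp in the inequality ∫₀^ℓ ((1/x)∫₀^x g(y) dy)^p dx/x ≤ C ∫₀^ℓ g(x)^p (1 - x/ℓ) dx/x for p ≥ 1: for every constant 0 < C < 1 there exists a non-negative measurable function g on (0,ℓ) (namely g(x) = x^α for small α > 0) for which the inequality with constant C fails. -/
open MeasureTheory Set Real

lemma integral_Ioo_rpow_aux {r : ℝ} (hr : -1 < r) (t : ℝ) (ht : 0 ≤ t) :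
    ∫ x in Ioo (0:ℝ) t, x ^ r = t ^ (r + 1) / (r + 1) := by
  rw [← integral_Ioc_eq_integral_Ioo, ← intervalIntegral.integral_of_le ht,
    integral_rpow (Or.inl hr), Real.zero_rpow (by linarith), sub_zero]

lemma integrableOn_Ioo_rpow_aux {r : ℝ} (hr : -1 < r) (t : ℝ) (ht : 0 ≤ t) :
    IntegrableOn (fun x : ℝ => x ^ r) (Ioo 0 t) := by
  have := intervalIntegral.intervalIntegrable_rpow' (a := 0) (b := t) hr
  rwa [intervalIntegrable_iff_integrableOn_Ioo_of_le ht] at this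

/-- Sharpness of the constant 1 in the finite-interval convexity form of Hardy's
inequality: for `p ≥ 1` and any `0 < C < 1` there is a non-negative measurable `g`
on `(0, ℓ)` for which the inequality with constant `C` fails. -/
theorem hardy_haar_finite_interval_sharp (ℓ : ℝ) (hℓ : 0 < ℓ) (p : ℝ) (hp : 1 ≤ p)
    (C : ℝ) (hC0 : 0 < C) (hC1 : C < 1) :
    ∃ g : ℝ → ℝ, Measurable g ∧ (∀ x ∈ Ioo (0:ℝ) ℓ, 0 ≤ g x) ∧
      ¬ (∫ x in Ioo (0:ℝ) ℓ, ((1/x) * ∫ y in Ioo (0:ℝ) x, g y) ^ p / x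
          ≤ C * ∫ x in Ioo (0:ℝ) ℓ, (g x) ^ p * (1 - x / ℓ) / x) := by
  have hp0 : 0 < p := lt_of_lt_of_le one_pos hp
  have hlogC : 0 < Real.log (1/C) := Real.log_pos (by rw [lt_div_iff₀ hC0]; linarith)
  set α := Real.log (1/C) / (2*p) with hα_def
  have hα : 0 < α := div_pos hlogC (by linarith)
  set b := α * p with hb_def
  have hbpos : 0 < b := mul_pos hα hp0
  have hαone : (0:ℝ) < α + 1 := by linarith
  have hA : (0:ℝ) < (α + 1) ^ p := Real.rpow_pos_of_pos hαone p
  refine ⟨fun x => x ^ α, by fun_prop,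
    fun x hx => Real.rpow_nonneg hx.1.le _, ?_⟩
  -- compute the left-hand integral
  have hLHS : (∫ x in Ioo (0:ℝ) ℓ, ((1/x) * ∫ y in Ioo (0:ℝ) x, (fun x => x ^ α) y) ^ p / x)
      = (ℓ ^ b / b) / (α + 1) ^ p := by
    have hcongr : ∀ x ∈ Ioo (0:ℝ) ℓ,
        ((1/x) * ∫ y in Ioo (0:ℝ) x, (fun x => x ^ α) y) ^ p / x
          = x ^ (b - 1) / (α + 1) ^ p := by
      intro x hx
      have hx0 : 0 < x := hx.1
      rw [integral_Ioo_rpow_aux (by linarith) x hx0.le]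
      have h1 : (1/x) * (x ^ (α + 1) / (α + 1)) = x ^ α / (α + 1) := by
        rw [Real.rpow_add hx0, Real.rpow_one]
        field_simp
      rw [h1, Real.div_rpow (Real.rpow_nonneg hx0.le _) hαone.le,
        ← Real.rpow_mul hx0.le, ← hb_def, Real.rpow_sub hx0, Real.rpow_one]
      field_simp
    rw [setIntegral_congr_fun measurableSet_Ioo hcongr]
    rw [integral_div, integral_Ioo_rpow_aux (by linarith) ℓ hℓ.le, sub_add_cancel]
  -- compute the right-hand integral
  have hRHS : (∫ x in Ioo (0:ℝ) ℓ, ((fun x => x ^ α) x) ^ p * (1 - x / ℓ) / x)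
      = ℓ ^ b / b - ℓ ^ b / (b + 1) := by
    have hcongr : ∀ x ∈ Ioo (0:ℝ) ℓ,
        ((fun x => x ^ α) x) ^ p * (1 - x / ℓ) / x = x ^ (b - 1) - x ^ b / ℓ := by
      intro x hx
      have hx0 : 0 < x := hx.1
      simp only
      rw [← Real.rpow_mul hx0.le, ← hb_def]
      rw [Real.rpow_sub hx0, Real.rpow_one]
      field_simp
    rw [setIntegral_congr_fun measurableSet_Ioo hcongr]
    rw [integral_sub (integrableOn_Ioo_rpow_aux (by linarith) ℓ hℓ.le)
      ((integrableOn_Ioo_rpow_aux (by linarith : (-1:ℝ) < b) ℓ hℓ.le).div_const ℓ)]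
    rw [integral_div, integral_Ioo_rpow_aux (by linarith) ℓ hℓ.le, sub_add_cancel,
      integral_Ioo_rpow_aux (by linarith : (-1:ℝ) < b) ℓ hℓ.le]
    congr 1
    rw [Real.rpow_add hℓ, Real.rpow_one]
    field_simp
  rw [hLHS, hRHS]
  -- the key numeric inequality : C * (α+1)^p < b + 1
  have hkey : C * (α + 1) ^ p < b + 1 := by
    have h1 : (α + 1) ^ p ≤ Real.exp b := by
      have h2 : α + 1 ≤ Real.exp α := by
        have := Real.add_one_le_exp α; linarith
      calc (α + 1) ^ p ≤ (Real.exp α) ^ p :=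
            Real.rpow_le_rpow hαone.le h2 hp0.le
        _ = Real.exp b := by rw [← Real.exp_mul]
    have hb_eq : b = Real.log (1/C) / 2 := by
      rw [hb_def, hα_def]; field_simp
    have h3 : C * Real.exp b < 1 := by
      have hClog : Real.log C < 0 := Real.log_neg hC0 hC1
      have : C * Real.exp b = Real.exp (Real.log C + b) := by
        rw [Real.exp_add, Real.exp_log hC0]
      rw [this]
      apply Real.exp_lt_one_iff.mpr  -- maybe wrong name
      rw [hb_eq, one_div, Real.log_inv]
      linarith
    nlinarith [mul_le_mul_of_nonneg_left h1 hC0.le]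
  -- conclude
  push_neg
  have hK : (0:ℝ) < ℓ ^ b := Real.rpow_pos_of_pos hℓ b
  have heq : ℓ ^ b / b - ℓ ^ b / (b + 1) = ℓ ^ b / (b * (b + 1)) := by
    field_simp; ring
  rw [heq, div_div, ← mul_div_assoc, div_lt_div_iff₀ (by positivity) (by positivity)]
  nlinarith [mul_pos hK hbpos, mul_pos (mul_pos hK hbpos) (sub_pos.mpr hkey)]
end
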